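/- In the projectivization ℙ𝕊³ of 𝕊³, the classes of the weight vectors w₁ = ((0,1),(0,∞),(0,1)) and w₂ = (0,(0,1),0) are distinct, the sequence of classes [((0,1),(0,r),(0,1))] converges both to [w₁] and to [w₂] as r → ∞, and hence [w₁] and [w₂] cannot be separated by disjoint open sets; in particular ℙ𝕊³ is not Hausdorff. -/

import Mathlib

open scoped ENNReal

/-- The parameter space `𝕊 = {0} ∪ (ℕ₀ × (0,∞])`, realized as a subtype of the
lexicographic product `ℕ ×ₗ ℝ≥0∞`: the pair `(0,0)` represents `0 ∈ 𝕊`, and the pairs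
`(i,t)` with `t > 0` represent the elements of `ℕ₀ × (0,∞]`.  The induced subtype
order is exactly the order of the paper: `0` is the least element, and
`(i,t) < (j,s)` iff `i < j`, or `i = j` and `t < s`. -/
abbrev Sp : Type :=
  {p : ℕ ×ₗ ℝ≥0∞ // ((ofLex p).1 = 0 ∧ (ofLex p).2 = 0) ∨ 0 < (ofLex p).2}

/-- The zero element of `𝕊`. -/
def sZero : Sp := ⟨toLex (0, 0), Or.inl ⟨rfl, rfl⟩⟩

/-- The element `(i,t)` of `𝕊`, for a level `i ∈ ℕ₀` and real part `t ∈ (0,∞]`. -/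
def sNode (i : ℕ) (t : ℝ≥0∞) (ht : 0 < t) : Sp := ⟨toLex (i, t), Or.inr ht⟩

/-- The level `ℒ(x)` of an element of `𝕊` (conventionally `0` on the zero element). -/
def sLevel (x : Sp) : ℕ := (ofLex x.val).1

/-- The real part `ℛ(x)` of an element of `𝕊` (equal to `0` exactly on the zero element). -/
def sRe (x : Sp) : ℝ≥0∞ := (ofLex x.val).2

theorem sNode_ne_sZero {i : ℕ} {t : ℝ≥0∞} (ht : 0 < t) : sNode i t ht ≠ sZero :=
  fun h => ht.ne' (congrArg sRe h)

/-- Scalar multiplication by an extended real `λ`: `λ·(i,t) = (i, λ·t)` and `λ·0 = 0`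
(intended for positive scalars `λ ∈ (0,∞]`). -/
noncomputable def sSMul (l : ℝ≥0∞) (x : Sp) : Sp :=
  if hx : sRe x = 0 then sZero
  else if hl : l = 0 then sZero
  else sNode (sLevel x) (l * sRe x) (ENNReal.mul_pos hl hx)

/-- `𝕊` carries the order topology. -/
instance : TopologicalSpace Sp := Preorder.topology Sp

instance : OrderTopology Sp := ⟨rfl⟩

/-- `𝕊³` minus the zero vector. -/
abbrev SV3 : Type := {v : Sp × Sp × Sp // v ≠ (sZero, sZero, sZero)}

/-- Projective equivalence on `𝕊³` minus the zero vector: `w = λ·v` coordinatewise for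
some real `λ ∈ (0,∞)` (i.e. some positive finite extended real). -/
def projRel3 (v w : SV3) : Prop :=
  ∃ l : ℝ≥0∞, 0 < l ∧ l ≠ ∞ ∧
    w.val.1 = sSMul l v.val.1 ∧ w.val.2.1 = sSMul l v.val.2.1 ∧
    w.val.2.2 = sSMul l v.val.2.2

/-- The projectivization `ℙ𝕊³`, with the quotient topology. -/
abbrev PS3 : Type := Quot projRel3

/-- The weight vector `w₁ = ((0,1),(0,∞),(0,1))`. -/
noncomputable def w1 : SV3 :=
  ⟨(sNode 0 1 zero_lt_one, sNode 0 ∞ (by simp), sNode 0 1 zero_lt_one),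
    fun h => sNode_ne_sZero zero_lt_one (congrArg Prod.fst h)⟩

/-- The weight vector `w₂ = (0,(0,1),0)`. -/
noncomputable def w2 : SV3 :=
  ⟨(sZero, sNode 0 1 zero_lt_one, sZero),
    fun h => sNode_ne_sZero zero_lt_one (congrArg (fun v => v.2.1) h)⟩

/-- The weight vector `((0,1),(0,r),(0,1))` for `r ∈ (0,∞)`. -/
noncomputable def wr (r : ℝ≥0∞) (hr : 0 < r) : SV3 :=
  ⟨(sNode 0 1 zero_lt_one, sNode 0 r hr, sNode 0 1 zero_lt_one),
    fun h => sNode_ne_sZero zero_lt_one (congrArg Prod.fst h)⟩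

section Stmt15Aux
open Filter

lemma sRe_sNode (i : ℕ) (t : ℝ≥0∞) (ht : 0 < t) : sRe (sNode i t ht) = t := rfl

lemma sRe_sZero' : sRe sZero = 0 := rfl

lemma sNode_eq (i : ℕ) {t s : ℝ≥0∞} (ht : 0 < t) (hs : 0 < s) (h : t = s) :
    sNode i t ht = sNode i s hs := by subst h; rfl

lemma sSMul_sZero (l : ℝ≥0∞) : sSMul l sZero = sZero := by
  simp [sSMul, sRe_sZero']

lemma sSMul_sNode (l : ℝ≥0∞) (hl : l ≠ 0) (i : ℕ) (t : ℝ≥0∞) (ht : 0 < t) :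
    sSMul l (sNode i t ht) = sNode i (l * t) (ENNReal.mul_pos hl ht.ne') := by
  unfold sSMul
  have h : sRe (sNode i t ht) ≠ 0 := ht.ne'
  rw [dif_neg h, dif_neg hl]
  rfl

lemma sp_lt_iff {x y : Sp} : x < y ↔
    ((ofLex x.val).1 < (ofLex y.val).1 ∨
      ((ofLex x.val).1 = (ofLex y.val).1 ∧ (ofLex x.val).2 < (ofLex y.val).2)) := by
  rw [← Subtype.coe_lt_coe]
  exact Prod.Lex.lt_iff

lemma aux_pos (n : ℕ) : (0 : ℝ≥0∞) < (n : ℝ≥0∞) + 1 :=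
  lt_of_lt_of_le zero_lt_one le_add_self

lemma aux_inv_pos (n : ℕ) : (0 : ℝ≥0∞) < ((n : ℝ≥0∞) + 1)⁻¹ := by simp

lemma tendsto_node_atTop :
    Tendsto (fun n : ℕ => sNode 0 ((n : ℝ≥0∞) + 1) (aux_pos n)) atTop
      (nhds (sNode 0 ∞ (by simp))) := by
  rw [tendsto_order]
  constructor
  · intro b hb
    rw [sp_lt_iff] at hb
    rcases hb with h | ⟨h1, h2⟩
    · exact absurd h (Nat.not_lt_zero _)
    · obtain ⟨N, hN⟩ := ENNReal.exists_nat_gt h2.ne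
      filter_upwards [eventually_ge_atTop N] with n hn
      rw [sp_lt_iff]
      exact Or.inr ⟨h1, hN.trans_le (le_trans (Nat.cast_le.2 hn) le_self_add)⟩
  · intro b hb
    replace hb := sp_lt_iff.1 hb
    filter_upwards with n
    rw [sp_lt_iff]
    rcases hb with h | ⟨_, h2⟩
    · exact Or.inl h
    · exact absurd h2 (not_top_lt)

lemma tendsto_node_zero :
    Tendsto (fun n : ℕ => sNode 0 (((n : ℝ≥0∞) + 1)⁻¹) (aux_inv_pos n)) atTop
      (nhds sZero) := by
  rw [tendsto_order]
  constructor
  · intro b hb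
    rw [sp_lt_iff] at hb
    rcases hb with h | ⟨_, h2⟩
    · exact absurd h (Nat.not_lt_zero _)
    · exact absurd h2 (not_lt.2 zero_le)
  · intro b hb
    replace hb := sp_lt_iff.1 hb
    rcases hb with h | ⟨h1, h2⟩
    · filter_upwards with n
      rw [sp_lt_iff]
      exact Or.inl h
    · obtain ⟨N, hN⟩ := ENNReal.exists_inv_nat_lt h2.ne'
      filter_upwards [eventually_ge_atTop N] with n hn
      rw [sp_lt_iff]
      refine Or.inr ⟨h1, lt_of_le_of_lt ?_ hN⟩
      exact ENNReal.inv_le_inv.2 (le_trans (Nat.cast_le.2 hn) le_self_add)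

lemma tendsto_node_const (i : ℕ) (t : ℝ≥0∞) (ht : 0 < t) :
    Tendsto (fun _ : ℕ => sNode i t ht) atTop (nhds (sNode i t ht)) :=
  tendsto_const_nhds

/-- The rescaled vector `((0,(n+1)⁻¹),(0,1),(0,(n+1)⁻¹))`. -/
noncomputable def vlow (n : ℕ) : SV3 :=
  ⟨(sNode 0 (((n : ℝ≥0∞) + 1)⁻¹) (aux_inv_pos n), sNode 0 1 zero_lt_one,
      sNode 0 (((n : ℝ≥0∞) + 1)⁻¹) (aux_inv_pos n)),
    fun h => sNode_ne_sZero zero_lt_one (congrArg (fun v => v.2.1) h)⟩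

lemma rel_wr_vlow (n : ℕ) :
    projRel3 (wr ((n : ℝ≥0∞) + 1) (aux_pos n)) (vlow n) := by
  refine ⟨((n : ℝ≥0∞) + 1)⁻¹, aux_inv_pos n, by simp, ?_, ?_, ?_⟩
  · show sNode 0 (((n : ℝ≥0∞) + 1)⁻¹) (aux_inv_pos n) =
      sSMul (((n : ℝ≥0∞) + 1)⁻¹) (sNode 0 1 zero_lt_one)
    rw [sSMul_sNode _ (aux_inv_pos n).ne' 0 1 zero_lt_one]
    exact sNode_eq 0 _ _ (mul_one _).symm
  · show sNode 0 1 zero_lt_one =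
      sSMul (((n : ℝ≥0∞) + 1)⁻¹) (sNode 0 ((n : ℝ≥0∞) + 1) (aux_pos n))
    rw [sSMul_sNode _ (aux_inv_pos n).ne' 0 _ (aux_pos n)]
    exact sNode_eq 0 _ _ (ENNReal.inv_mul_cancel (by simp) (by simp)).symm
  · show sNode 0 (((n : ℝ≥0∞) + 1)⁻¹) (aux_inv_pos n) =
      sSMul (((n : ℝ≥0∞) + 1)⁻¹) (sNode 0 1 zero_lt_one)
    rw [sSMul_sNode _ (aux_inv_pos n).ne' 0 1 zero_lt_one]
    exact sNode_eq 0 _ _ (mul_one _).symm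

lemma tendsto_SV3_w1 :
    Tendsto (fun n : ℕ => wr ((n : ℝ≥0∞) + 1) (aux_pos n)) atTop (nhds w1) := by
  rw [tendsto_subtype_rng]
  exact ((tendsto_node_const 0 1 zero_lt_one).prodMk_nhds
    ((tendsto_node_atTop).prodMk_nhds (tendsto_node_const 0 1 zero_lt_one)))

lemma tendsto_SV3_w2 :
    Tendsto (fun n : ℕ => vlow n) atTop (nhds w2) := by
  rw [tendsto_subtype_rng]
  exact (tendsto_node_zero.prodMk_nhds
    ((tendsto_node_const 0 1 zero_lt_one).prodMk_nhds tendsto_node_zero))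

lemma quot_invariant :
    ∀ v w : SV3, projRel3 v w → (sRe v.val.1 = 0) = (sRe w.val.1 = 0) := by
  rintro v w ⟨l, hl, -, h1, -, -⟩
  apply propext
  by_cases hv : sRe v.val.1 = 0
  · simp only [hv, iff_true]
    rw [h1]
    simp [sSMul, hv, sRe_sZero']
  · simp only [hv, iff_false, false_iff]
    rw [h1]
    simp only [sSMul, hv, dite_false, hl.ne', sRe_sNode]
    exact (ENNReal.mul_pos hl.ne' hv).ne'

end Stmt15Aux

/-- In `ℙ𝕊³`, the classes of `w₁ = ((0,1),(0,∞),(0,1))` and `w₂ = (0,(0,1),0)` are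
distinct, the sequence of classes `[((0,1),(0,r),(0,1))]` converges to both `[w₁]`
and `[w₂]` as `r → ∞`, hence `[w₁]` and `[w₂]` cannot be separated by disjoint open
sets; in particular `ℙ𝕊³` is not Hausdorff. -/
theorem stmt15 :
    Quot.mk projRel3 w1 ≠ Quot.mk projRel3 w2 ∧
    Filter.Tendsto
      (fun n : ℕ => Quot.mk projRel3 (wr ((n : ℝ≥0∞) + 1) (lt_of_lt_of_le zero_lt_one le_add_self)))
      Filter.atTop (nhds (Quot.mk projRel3 w1)) ∧
    Filter.Tendsto
      (fun n : ℕ => Quot.mk projRel3 (wr ((n : ℝ≥0∞) + 1) (lt_of_lt_of_le zero_lt_one le_add_self)))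
      Filter.atTop (nhds (Quot.mk projRel3 w2)) ∧
    (∀ U V : Set PS3, IsOpen U → IsOpen V →
      Quot.mk projRel3 w1 ∈ U → Quot.mk projRel3 w2 ∈ V → (U ∩ V).Nonempty) ∧
    ¬ T2Space PS3 := by
  have hne : Quot.mk projRel3 w1 ≠ Quot.mk projRel3 w2 := by
    intro h
    have h2 : Quot.lift (fun v : SV3 => sRe v.val.1 = 0) quot_invariant (Quot.mk projRel3 w1) =
        Quot.lift (fun v : SV3 => sRe v.val.1 = 0) quot_invariant (Quot.mk projRel3 w2) :=
      congrArg _ h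
    have h3 : ((1 : ℝ≥0∞) = 0) = ((0 : ℝ≥0∞) = 0) := h2
    exact one_ne_zero (cast h3.symm (rfl : (0 : ℝ≥0∞) = 0))
  have ht1 : Filter.Tendsto
      (fun n : ℕ => Quot.mk projRel3 (wr ((n : ℝ≥0∞) + 1) (aux_pos n)))
      Filter.atTop (nhds (Quot.mk projRel3 w1)) :=
    ((continuous_quot_mk).tendsto w1).comp tendsto_SV3_w1
  have ht2 : Filter.Tendsto
      (fun n : ℕ => Quot.mk projRel3 (wr ((n : ℝ≥0∞) + 1) (aux_pos n)))
      Filter.atTop (nhds (Quot.mk projRel3 w2)) := by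
    have heq : (fun n : ℕ => Quot.mk projRel3 (wr ((n : ℝ≥0∞) + 1) (aux_pos n))) =
        fun n : ℕ => Quot.mk projRel3 (vlow n) :=
      funext fun n => Quot.sound (rel_wr_vlow n)
    rw [heq]
    exact ((continuous_quot_mk).tendsto w2).comp tendsto_SV3_w2
  have hsep : ∀ U V : Set PS3, IsOpen U → IsOpen V →
      Quot.mk projRel3 w1 ∈ U → Quot.mk projRel3 w2 ∈ V → (U ∩ V).Nonempty := by
    intro U V hU hV hmU hmV
    have e1 := ht1.eventually_mem (hU.mem_nhds hmU)
    have e2 := ht2.eventually_mem (hV.mem_nhds hmV)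
    obtain ⟨n, hn1, hn2⟩ := (e1.and e2).exists
    exact ⟨_, hn1, hn2⟩
  refine ⟨hne, ht1, ht2, hsep, ?_⟩
  intro _
  obtain ⟨U, V, hU, hV, m1, m2, hdis⟩ := t2_separation hne
  obtain ⟨x, hx1, hx2⟩ := hsep U V hU hV m1 m2
  exact Set.disjoint_iff.1 hdis ⟨hx1, hx2⟩
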